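/- arXiv:1706.06958 — 2 statements merged into one kernel-verified Lean document; each statement's English description precedes it below -/
import Mathlib

section
/- Let A be a finite set of integers such that for every prime p, |A_p| ≤ p/2 + ε(p) for some nonnegative function ε on primes. Define the multiplicative function Δ with Δ(p^k) = p^{k-1}·(p/2 + ε(p)). Then for every positive integer v, |A|^2/Δ(v) ≤ Σ_{h mod v} |A(v;h)|^2, where A(v;h) = {a ∈ A : a ≡ h mod v}. -/
/-- A(v;h): the elements of A congruent to h modulo v. -/
def resClass (A : Finset ℤ) (v : ℕ) (h : ℕ) : Finset ℤ :=
  A.filter (fun a => a % (v : ℤ) = (h : ℤ))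

/-- A_v: the set of residue classes covered by A modulo v. -/
def resSet (A : Finset ℤ) (v : ℕ) : Finset ℤ :=
  A.image (fun a => a % (v : ℤ))

lemma resSet_mem_bounds {A : Finset ℤ} {v : ℕ} (hv : 0 < v) {x : ℤ}
    (hx : x ∈ resSet A v) : 0 ≤ x ∧ x < (v : ℤ) := by
  obtain ⟨a, _, rfl⟩ := Finset.mem_image.mp hx
  have hv' : (0 : ℤ) < v := by exact_mod_cast hv
  exact ⟨Int.emod_nonneg a hv'.ne', Int.emod_lt_of_pos a hv'⟩

/-- prime power bound: |A_{p^k}| ≤ p^(k-1) * |A_p| -/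
lemma resSet_primepow_le (A : Finset ℤ) (p k : ℕ) (hp : p.Prime) (hk : 1 ≤ k) :
    (resSet A (p ^ k)).card ≤ p ^ (k - 1) * (resSet A p).card := by
  have hppos : (0 : ℤ) < p := by exact_mod_cast hp.pos
  apply Finset.card_le_mul_card_image_of_maps_to (f := fun x => x % (p : ℤ))
    (t := resSet A p)
  · intro x hx
    obtain ⟨a, ha, rfl⟩ := Finset.mem_image.mp hx
    have : a % ((p ^ k : ℕ) : ℤ) % (p : ℤ) = a % (p : ℤ) := by
      push_cast
      exact Int.emod_emod_of_dvd a (dvd_pow_self (p : ℤ) (by omega))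
    rw [this]
    exact Finset.mem_image_of_mem _ ha
  · intro b _
    rw [← Finset.card_range (p ^ (k - 1))]
    apply Finset.card_le_card_of_injOn (fun x => (x / (p : ℤ)).toNat)
      (t := Finset.range (p ^ (k - 1)))
    · intro x hx
      have hx' := Finset.mem_filter.mp hx
      have hb := resSet_mem_bounds (pow_pos hp.pos k) hx'.1
      rw [Finset.mem_coe, Finset.mem_range]
      have h1 : 0 ≤ x / (p : ℤ) := Int.ediv_nonneg hb.1 hppos.le
      have h2 : x / (p : ℤ) < (p : ℤ) ^ (k - 1) := by
        rw [Int.ediv_lt_iff_lt_mul hppos]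
        have : ((p:ℤ) ^ (k-1)) * p = (p:ℤ) ^ k := by
          rw [← pow_succ]
          congr 1
          omega
        rw [this]
        have := hb.2
        push_cast at this ⊢
        exact this
      have : ((x / (p:ℤ)).toNat : ℤ) < ((p : ℤ)) ^ (k-1) := by
        rwa [Int.toNat_of_nonneg h1]
      exact_mod_cast this
    · intro x hx y hy hxy
      have hx' := Finset.mem_filter.mp hx
      have hy' := Finset.mem_filter.mp hy
      have hbx := resSet_mem_bounds (pow_pos hp.pos k) hx'.1
      have hby := resSet_mem_bounds (pow_pos hp.pos k) hy'.1
      have h1 : 0 ≤ x / (p : ℤ) := Int.ediv_nonneg hbx.1 hppos.le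
      have h2 : 0 ≤ y / (p : ℤ) := Int.ediv_nonneg hby.1 hppos.le
      have hdiv : x / (p : ℤ) = y / (p : ℤ) := by
        have := congrArg (fun n : ℕ => (n : ℤ)) hxy
        simpa [Int.toNat_of_nonneg h1, Int.toNat_of_nonneg h2] using this
      have hx2 := hx'.2
      have hy2 := hy'.2
      calc x = (p:ℤ) * (x / p) + x % p := (Int.mul_ediv_add_emod x p).symm
        _ = (p:ℤ) * (y / p) + y % p := by rw [hdiv, hx2, hy2]
        _ = y := Int.mul_ediv_add_emod y p

/-- CRT bound: |A_{mn}| ≤ |A_m| * |A_n| for coprime m n. -/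
lemma resSet_mul_le (A : Finset ℤ) (m n : ℕ) (hm : 0 < m) (hn : 0 < n)
    (hco : Nat.Coprime m n) :
    (resSet A (m * n)).card ≤ (resSet A m).card * (resSet A n).card := by
  rw [← Finset.card_product]
  apply Finset.card_le_card_of_injOn (fun x => (x % (m : ℤ), x % (n : ℤ)))
  · intro x hx
    obtain ⟨a, ha, rfl⟩ := Finset.mem_image.mp hx
    rw [Finset.mem_coe, Finset.mem_product]
    constructor
    · have : a % ((m * n : ℕ) : ℤ) % (m : ℤ) = a % (m : ℤ) := by
        push_cast
        exact Int.emod_emod_of_dvd a ⟨n, rfl⟩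
      simp only [this]
      exact Finset.mem_image_of_mem _ ha
    · have : a % ((m * n : ℕ) : ℤ) % (n : ℤ) = a % (n : ℤ) := by
        push_cast
        exact Int.emod_emod_of_dvd a ⟨m, mul_comm _ _⟩
      simp only [this]
      exact Finset.mem_image_of_mem _ ha
  · intro x hx y hy hxy
    have hmn : 0 < m * n := Nat.mul_pos hm hn
    have hbx := resSet_mem_bounds hmn hx
    have hby := resSet_mem_bounds hmn hy
    have h1 : x % (m:ℤ) = y % (m:ℤ) := (Prod.mk.injEq _ _ _ _ ▸ hxy).1
    have h2 : x % (n:ℤ) = y % (n:ℤ) := (Prod.mk.injEq _ _ _ _ ▸ hxy).2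
    have d1 : (m:ℤ) ∣ y - x := Int.ModEq.dvd (h1 : Int.ModEq (m:ℤ) x y)
    have d2 : (n:ℤ) ∣ y - x := Int.ModEq.dvd (h2 : Int.ModEq (n:ℤ) x y)
    have dco : IsCoprime (m:ℤ) (n:ℤ) := Nat.isCoprime_iff_coprime.mpr hco
    have dmn : ((m:ℤ) * n) ∣ y - x := dco.mul_dvd d1 d2
    have hlt : |y - x| < (m:ℤ) * n := by
      have hb1 := hbx.1; have hb2 := hbx.2; have hb3 := hby.1; have hb4 := hby.2
      push_cast at hb2 hb4 ⊢
      rw [abs_lt]; constructor <;> nlinarith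
    have := Int.eq_zero_of_abs_lt_dvd dmn hlt
    omega

lemma delta_bound (A : Finset ℤ) (ε : ℕ → ℝ)
    (hε : ∀ p : ℕ, p.Prime → 0 ≤ ε p)
    (hA : ∀ p : ℕ, p.Prime → ((resSet A p).card : ℝ) ≤ (p : ℝ) / 2 + ε p)
    (Δ : ℕ → ℝ)
    (hΔmul : ∀ m n : ℕ, Nat.Coprime m n → Δ (m * n) = Δ m * Δ n)
    (hΔone : Δ 1 = 1)
    (hΔpp : ∀ p k : ℕ, p.Prime → 1 ≤ k →
      Δ (p ^ k) = (p : ℝ) ^ (k - 1) * ((p : ℝ) / 2 + ε p)) :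
    ∀ v : ℕ, 1 ≤ v → 0 < Δ v ∧ ((resSet A v).card : ℝ) ≤ Δ v := by
  intro v
  induction v using Nat.recOnPosPrimePosCoprime with
  | prime_pow p k hp hk =>
    intro _
    have hp' : p.Prime := hp
    have h2 : (2:ℝ) ≤ p := by exact_mod_cast hp'.two_le
    have hpos : 0 < (p:ℝ)/2 + ε p := by
      have := hε p hp'; linarith
    rw [hΔpp p k hp' hk]
    constructor
    · positivity
    · have hle := resSet_primepow_le A p k hp' hk
      calc ((resSet A (p ^ k)).card : ℝ) ≤ ((p ^ (k-1) * (resSet A p).card : ℕ) : ℝ) := by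
            exact_mod_cast hle
        _ = (p:ℝ)^(k-1) * ((resSet A p).card : ℝ) := by push_cast; ring
        _ ≤ (p:ℝ)^(k-1) * ((p:ℝ)/2 + ε p) := by
            apply mul_le_mul_of_nonneg_left (hA p hp') (by positivity)
  | zero => intro h; omega
  | one =>
    intro _
    rw [hΔone]
    refine ⟨one_pos, ?_⟩
    have : resSet A 1 ⊆ {0} := by
      intro x hx
      obtain ⟨a, _, rfl⟩ := Finset.mem_image.mp hx
      simp
    have := Finset.card_le_card this
    simp only [Finset.card_singleton] at this
    exact_mod_cast this
  | coprime a b ha hb hco iha ihb =>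
    intro _
    obtain ⟨hpa, hca⟩ := iha (by omega)
    obtain ⟨hpb, hcb⟩ := ihb (by omega)
    rw [hΔmul a b hco]
    refine ⟨mul_pos hpa hpb, ?_⟩
    have hle := resSet_mul_le A a b (by omega) (by omega) hco
    calc ((resSet A (a * b)).card : ℝ)
        ≤ (((resSet A a).card * (resSet A b).card : ℕ) : ℝ) := by exact_mod_cast hle
      _ = ((resSet A a).card : ℝ) * ((resSet A b).card : ℝ) := by push_cast; ring
      _ ≤ Δ a * Δ b := by
          apply mul_le_mul hca hcb (by positivity) hpa.le

/-- indices of nonempty residue classes -/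
def larger_sieve_N (A : Finset ℤ) (v : ℕ) : Finset ℕ :=
  (Finset.range v).filter (fun h => (resClass A v h).card ≠ 0)

theorem larger_sieve_composite (A : Finset ℤ) (ε : ℕ → ℝ)
    (hε : ∀ p : ℕ, p.Prime → 0 ≤ ε p)
    (hA : ∀ p : ℕ, p.Prime → ((resSet A p).card : ℝ) ≤ (p : ℝ) / 2 + ε p)
    (Δ : ℕ → ℝ)
    (hΔmul : ∀ m n : ℕ, Nat.Coprime m n → Δ (m * n) = Δ m * Δ n)
    (hΔone : Δ 1 = 1)
    (hΔpp : ∀ p k : ℕ, p.Prime → 1 ≤ k →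
      Δ (p ^ k) = (p : ℝ) ^ (k - 1) * ((p : ℝ) / 2 + ε p)) :
    ∀ v : ℕ, 1 ≤ v →
      ((A.card : ℝ) ^ 2) / Δ v ≤
        ∑ h ∈ Finset.range v, ((resClass A v h).card : ℝ) ^ 2 := by
  intro v hv
  have hv' : (0:ℤ) < v := by exact_mod_cast hv
  obtain ⟨hΔpos, hΔcard⟩ := delta_bound A ε hε hA Δ hΔmul hΔone hΔpp v hv
  -- A is the disjoint union of its residue classes
  have hsum : A.card = ∑ h ∈ Finset.range v, (resClass A v h).card := by
    rw [Finset.card_eq_sum_card_fiberwise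
      (f := fun a : ℤ => (a % (v:ℤ)).toNat) (t := Finset.range v) ?_]
    · apply Finset.sum_congr rfl
      intro h hh
      rw [Finset.mem_range] at hh
      congr 1
      unfold resClass
      apply Finset.filter_congr
      intro a _
      have h0 : 0 ≤ a % (v:ℤ) := Int.emod_nonneg a hv'.ne'
      have h1 : a % (v:ℤ) < v := Int.emod_lt_of_pos a hv'
      show (a % (v:ℤ)).toNat = h ↔ a % (v:ℤ) = (h:ℤ)
      omega
    · intro a _
      rw [Finset.mem_coe, Finset.mem_range]
      have h0 : 0 ≤ a % (v:ℤ) := Int.emod_nonneg a hv'.ne'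
      have h1 : a % (v:ℤ) < v := Int.emod_lt_of_pos a hv'
      show (a % (v:ℤ)).toNat < v
      omega
  have hNdef : larger_sieve_N A v = (Finset.range v).filter (fun h => (resClass A v h).card ≠ 0) := rfl
  have hN : ((larger_sieve_N A v).card : ℝ) ≤ Δ v := by
    have hle : (larger_sieve_N A v).card ≤ (resSet A v).card := by
      refine Finset.card_le_card_of_injOn (fun h => (h : ℤ)) ?_ ?_
      · intro h hh
        obtain ⟨_, hne⟩ := Finset.mem_filter.mp hh
        obtain ⟨a, ha⟩ := Finset.card_ne_zero.mp hne
        obtain ⟨haA, hmod⟩ := Finset.mem_filter.mp ha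
        show (h:ℤ) ∈ resSet A v
        exact Finset.mem_image.mpr ⟨a, haA, hmod⟩
      · intro x _ y _ hxy
        simp only at hxy
        exact_mod_cast hxy
    calc ((larger_sieve_N A v).card : ℝ) ≤ ((resSet A v).card : ℝ) := by exact_mod_cast hle
      _ ≤ Δ v := hΔcard
  have hsum2 : (A.card : ℝ) = ∑ h ∈ larger_sieve_N A v, ((resClass A v h).card : ℝ) := by
    rw [hsum]
    push_cast
    refine (Finset.sum_subset (hNdef ▸ Finset.filter_subset _ _) ?_).symm
    intro h hr hh
    rw [hNdef, Finset.mem_filter, not_and, not_not] at hh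
    rw [hh hr]
    simp
  have hCS : ((A.card : ℝ)) ^ 2 ≤ ((larger_sieve_N A v).card : ℝ) * ∑ h ∈ larger_sieve_N A v, ((resClass A v h).card : ℝ) ^ 2 := by
    rw [hsum2]
    exact_mod_cast sq_sum_le_card_mul_sum_sq
  have hsub : ∑ h ∈ larger_sieve_N A v, ((resClass A v h).card : ℝ) ^ 2
      ≤ ∑ h ∈ Finset.range v, ((resClass A v h).card : ℝ) ^ 2 := by
    apply Finset.sum_le_sum_of_subset_of_nonneg (hNdef ▸ Finset.filter_subset _ _)
    intro h _ _
    exact sq_nonneg _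
  have hSnn : 0 ≤ ∑ h ∈ larger_sieve_N A v, ((resClass A v h).card : ℝ) ^ 2 := Finset.sum_nonneg fun _ _ => sq_nonneg _
  rw [div_le_iff₀ hΔpos]
  calc ((A.card : ℝ)) ^ 2 ≤ ((larger_sieve_N A v).card : ℝ) * ∑ h ∈ larger_sieve_N A v, ((resClass A v h).card : ℝ) ^ 2 := hCS
    _ ≤ Δ v * ∑ h ∈ larger_sieve_N A v, ((resClass A v h).card : ℝ) ^ 2 := by
        apply mul_le_mul_of_nonneg_right hN hSnn
    _ ≤ Δ v * ∑ h ∈ Finset.range v, ((resClass A v h).card : ℝ) ^ 2 := by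
        apply mul_le_mul_of_nonneg_left hsub hΔpos.le
    _ = (∑ h ∈ Finset.range v, ((resClass A v h).card : ℝ) ^ 2) * Δ v := mul_comm _ _
end

section
/- Let Δ: ℕ → ℝ be the multiplicative function with Δ(p) = p/2 + ε(p) for primes p (ε(p) ≥ 0 uniformly bounded), restricted to squarefree n. Then M(x) := Σ_{n ≤ x squarefree} 1/Δ(n) = (𝔖/2)(log x)^2 + O(log x), where 𝔖 = Π_p (1-1/p)^2 (1 + 1/Δ(p)) converges. -/
open Finset Filter

namespace SqDelta

/-- integral of log t / t -/
lemma integral_log_div_self' {a b : ℝ} (ha : 1 ≤ a) (hab : a ≤ b) :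
    ∫ t in a..b, Real.log t / t = (Real.log b)^2/2 - (Real.log a)^2/2 := by
  have key : ∀ x ∈ Set.uIcc a b, HasDerivAt (fun t => (Real.log t)^2/2) (Real.log x / x) x := by
    intro x hx
    rw [Set.uIcc_of_le hab] at hx
    have hx0 : x ≠ 0 := by
      have := hx.1
      intro h; rw [h] at this; linarith
    have h1 : HasDerivAt Real.log x⁻¹ x := Real.hasDerivAt_log hx0
    have h2 := (h1.pow 2).div_const 2
    refine h2.congr_deriv ?_
    have : (0:ℝ) < x := lt_of_lt_of_le one_pos (le_trans ha hx.1)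
    field_simp
    ring
  rw [intervalIntegral.integral_eq_sub_of_hasDerivAt key ?_]
  refine (ContinuousOn.div (Real.continuousOn_log.mono ?_) continuousOn_id ?_).intervalIntegrable
  · intro x hx
    rw [Set.uIcc_of_le hab] at hx
    simp only [Set.mem_compl_iff, Set.mem_singleton_iff]
    intro h; rw [h] at hx; linarith [hx.1]
  · intro x hx
    rw [Set.uIcc_of_le hab] at hx
    simp only [id]
    intro h; rw [h] at hx; linarith [hx.1]

/-- harmonic partial sums -/
noncomputable def Hs (m : ℕ) : ℝ := ∑ a ∈ Icc 1 m, 1/(a:ℝ)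

lemma Hs_eq (m : ℕ) : Hs m = ((harmonic m : ℚ) : ℝ) := by
  rw [Hs, harmonic]
  push_cast
  rw [show Icc 1 m = Ico 1 (m+1) by rw [Finset.Ico_add_one_right_eq_Icc], Finset.sum_Ico_eq_sum_range]
  simp [add_comm]

lemma Hs_le (m : ℕ) : Hs m ≤ 1 + Real.log m := by
  rw [Hs_eq]; exact harmonic_le_one_add_log m

lemma le_Hs (m : ℕ) : Real.log m ≤ Hs m := by
  rcases Nat.eq_zero_or_pos m with rfl | hm
  · simp [Hs]
  rw [Hs_eq]
  refine le_trans ?_ (log_add_one_le_harmonic m)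
  apply Real.log_le_log (by positivity)
  exact_mod_cast Nat.le_succ m

lemma Hs_nonneg (m : ℕ) : 0 ≤ Hs m := by
  apply Finset.sum_nonneg; intro a _; positivity


noncomputable def Ps (m : ℕ) : ℝ := ∑ a ∈ Icc 1 m, Real.log a / a

lemma log_two_le_one : Real.log 2 ≤ 1 := by
  rw [show (1:ℝ) = Real.log (Real.exp 1) by rw [Real.log_exp]]
  apply Real.log_le_log (by norm_num)
  linarith [Real.add_one_le_exp 1]

lemma Ps_est (m : ℕ) (hm : 1 ≤ m) : |Ps m - (Real.log m)^2/2| ≤ 10 := by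
  have hlog2 := log_two_le_one
  have hlog2' := Real.log_nonneg (by norm_num : (1:ℝ) ≤ 2)
  have hlog3 : Real.log 3 ≤ 2 := by
    calc Real.log 3 ≤ Real.log 4 := Real.log_le_log (by norm_num) (by norm_num)
    _ = 2 * Real.log 2 := by
        rw [show (4:ℝ) = 2^2 by norm_num, Real.log_pow]; push_cast; ring
    _ ≤ 2 := by linarith
  have hlog3' := Real.log_nonneg (by norm_num : (1:ℝ) ≤ 3)
  rcases le_or_gt m 3 with h3 | h4
  · interval_cases m
    · simp [Ps]
    · have : Icc 1 2 = {1, 2} := by decide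
      rw [Ps, this]
      rw [Finset.sum_insert (by decide), Finset.sum_singleton]
      rw [abs_le]
      push_cast
      norm_num
      constructor <;> nlinarith [Real.log_nonneg (by norm_num : (1:ℝ) ≤ 2)]
    · have : Icc 1 3 = {1, 2, 3} := by decide
      rw [Ps, this]
      rw [Finset.sum_insert (by decide), Finset.sum_insert (by decide), Finset.sum_singleton]
      rw [abs_le]
      push_cast
      norm_num
      constructor <;> nlinarith
  · -- m ≥ 4
    have hm4 : 4 ≤ m := h4
    have hanti : ∀ b : ℝ, AntitoneOn (fun t => Real.log t / t) (Set.Icc (3:ℝ) b) := by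
      intro b
      apply Real.log_div_self_antitoneOn.mono
      intro x hx
      simp only [Set.mem_Ici]
      calc Real.exp 1 ≤ 2.7182818286 := le_of_lt Real.exp_one_lt_d9
      _ ≤ 3 := by norm_num
      _ ≤ x := hx.1
    -- split the sum
    have hsplit : Ps m = Ps 3 + ∑ a ∈ Ico 4 (m+1), Real.log a / a := by
      rw [Ps, Ps]
      rw [show Icc 1 m = Ico 1 (m+1) by rw [Finset.Ico_add_one_right_eq_Icc],
          show Icc 1 3 = Ico 1 4 by decide]
      exact (Finset.sum_Ico_consecutive (fun a : ℕ => Real.log a / a)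
        (by norm_num : 1 ≤ 4) (by omega : 4 ≤ m+1)).symm
    set G := ∑ a ∈ Ico 4 (m+1), Real.log a / a with hG
    have hupper : G ≤ (Real.log m)^2/2 - (Real.log 3)^2/2 := by
      have h1 : ∑ i ∈ Ico 3 m, (fun t => Real.log t / t) ((i:ℕ) + 1 : ℕ) ≤
          ∫ x in (3:ℝ)..(m:ℝ), Real.log x / x := by
        have := AntitoneOn.sum_le_integral_Ico (f := fun t => Real.log t / t)
          (by omega : 3 ≤ m) (hanti m)
        convert this using 2
        norm_num
      have h2 : G = ∑ i ∈ Ico 3 m, (fun t => Real.log t / t) ((i:ℕ) + 1 : ℕ) := by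
        rw [hG, show (4:ℕ) = 3 + 1 by rfl, show m + 1 = m + 1 by rfl]
        rw [← Finset.map_add_right_Ico 3 m 1, Finset.sum_map]
        rfl
      rw [h2]
      calc _ ≤ ∫ x in (3:ℝ)..(m:ℝ), Real.log x / x := h1
      _ = _ := by
          rw [integral_log_div_self' (by norm_num) (by exact_mod_cast by omega : (3:ℝ) ≤ m)]
    have hlower : (Real.log m)^2/2 - (Real.log 4)^2/2 ≤ G := by
      have h1 : ∫ x in ((4:ℕ):ℝ)..((m+1:ℕ):ℝ), Real.log x / x ≤
          ∑ i ∈ Ico 4 (m+1), (fun t => Real.log t / t) (i:ℕ) := by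
        apply AntitoneOn.integral_le_sum_Ico (f := fun t => Real.log t / t)
          (by omega : 4 ≤ m + 1)
        refine (hanti ((m:ℝ)+1)).mono ?_
        intro x hx
        constructor
        · have := hx.1; push_cast at this ⊢; linarith
        · have := hx.2; push_cast at this ⊢; linarith
      have h2 : (Real.log m)^2/2 - (Real.log 4)^2/2 ≤
          ∫ x in ((4:ℕ):ℝ)..((m+1:ℕ):ℝ), Real.log x / x := by
        rw [show ((4:ℕ):ℝ) = (4:ℝ) by norm_num]
        rw [integral_log_div_self' (by norm_num) (by exact_mod_cast by omega : (4:ℝ) ≤ (m+1:ℕ))]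
        have : Real.log m ≤ Real.log ((m+1:ℕ):ℝ) := by
          apply Real.log_le_log (by exact_mod_cast by omega : (0:ℝ) < m)
          exact_mod_cast Nat.le_succ m
        have h0 : 0 ≤ Real.log m := Real.log_nonneg (by exact_mod_cast by omega : (1:ℝ) ≤ m)
        nlinarith
      exact le_trans h2 h1
    have hPs3 : 0 ≤ Ps 3 ∧ Ps 3 ≤ 2 := by
      constructor
      · apply Finset.sum_nonneg; intro a ha
        have : 1 ≤ a := (Finset.mem_Icc.mp ha).1
        have : (1:ℝ) ≤ a := by exact_mod_cast this
        positivity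
      · have : Icc 1 3 = {1, 2, 3} := by decide
        rw [Ps, this]
        rw [Finset.sum_insert (by decide), Finset.sum_insert (by decide), Finset.sum_singleton]
        push_cast
        norm_num
        nlinarith
    have hlog4 : (Real.log 4)^2/2 ≤ 2 := by
      have : Real.log 4 = 2 * Real.log 2 := by
        rw [show (4:ℝ) = 2^2 by norm_num, Real.log_pow]; push_cast; ring
      nlinarith
    rw [hsplit, abs_le]
    constructor <;> nlinarith [sq_nonneg (Real.log 3)]


lemma hyperbola (a b : ArithmeticFunction ℝ) (x : ℕ) :
    ∑ n ∈ Icc 1 x, (a * b) n = ∑ d ∈ Icc 1 x, a d * ∑ e ∈ Icc 1 (x / d), b e := by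
  simp_rw [ArithmeticFunction.mul_apply, Finset.mul_sum]
  rw [Finset.sum_sigma', Finset.sum_sigma']
  refine Finset.sum_nbij' (fun z => ⟨z.2.1, z.2.2⟩) (fun w => ⟨w.1 * w.2, (w.1, w.2)⟩)
    ?_ ?_ ?_ ?_ ?_
  · rintro ⟨n, ⟨d, e⟩⟩ hz
    rw [Finset.mem_sigma, Finset.mem_Icc] at hz
    obtain ⟨⟨hn1, hnx⟩, hde⟩ := hz
    obtain ⟨hprod, hn0⟩ := Nat.mem_divisorsAntidiagonal.mp hde
    simp only at hprod hn0
    dsimp only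
    rw [Finset.mem_sigma, Finset.mem_Icc, Finset.mem_Icc]
    have hd0 : 0 < d := Nat.pos_of_ne_zero (by rintro rfl; rw [zero_mul] at hprod; omega)
    have he0 : 0 < e := Nat.pos_of_ne_zero (by rintro rfl; rw [mul_zero] at hprod; omega)
    have hdx : d * e ≤ x := by rw [hprod]; exact hnx
    refine ⟨⟨hd0, ?_⟩, he0, ?_⟩
    · calc d ≤ d * e := Nat.le_mul_of_pos_right d he0
      _ ≤ x := hdx
    · rw [Nat.le_div_iff_mul_le hd0, mul_comm]
      exact hdx
  · rintro ⟨d, e⟩ hw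
    rw [Finset.mem_sigma, Finset.mem_Icc, Finset.mem_Icc] at hw
    obtain ⟨⟨hd1, hdx⟩, he1, hex⟩ := hw
    dsimp only
    rw [Finset.mem_sigma, Finset.mem_Icc, Nat.mem_divisorsAntidiagonal]
    have hde : d * e ≤ x := by
      rw [Nat.le_div_iff_mul_le (by omega)] at hex
      calc d * e = e * d := mul_comm d e
      _ ≤ x := hex
    exact ⟨⟨Nat.one_le_iff_ne_zero.mpr (by positivity), hde⟩, rfl, by positivity⟩
  · rintro ⟨n, ⟨d, e⟩⟩ hz
    rw [Finset.mem_sigma] at hz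
    have h1 := (Nat.mem_divisorsAntidiagonal.mp hz.2).1
    simp only at h1
    exact Sigma.ext (by simpa using h1) (by simp)
  · rintro ⟨d, e⟩ _; rfl
  · rintro ⟨n, ⟨d, e⟩⟩ _; rfl

lemma mul_apply_pp (a b : ArithmeticFunction ℝ) {p : ℕ} (hp : p.Prime) (k : ℕ) :
    (a * b) (p ^ k) = ∑ i ∈ range (k + 1), a (p ^ i) * b (p ^ (k - i)) := by
  rw [ArithmeticFunction.mul_apply,
      Nat.sum_divisorsAntidiagonal (f := fun d e => a d * b e),
      Nat.divisors_prime_pow hp, Finset.sum_map]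
  refine Finset.sum_congr rfl fun i hi => ?_
  simp only [Function.Embedding.coeFn_mk]
  congr 2
  exact Nat.pow_div (Nat.lt_succ_iff.mp (Finset.mem_range.mp hi)) hp.pos




noncomputable def fArith (Δ : ℕ → ℝ) : ArithmeticFunction ℝ :=
  ⟨fun n => if Squarefree n then 1 / Δ n else 0, by simp [not_squarefree_zero]⟩

noncomputable def uArith : ArithmeticFunction ℝ := ⟨fun n => ((n : ℝ))⁻¹, by simp⟩

noncomputable def vArith : ArithmeticFunction ℝ :=
  ⟨fun n => ((ArithmeticFunction.moebius n : ℤ) : ℝ) * ((n : ℝ))⁻¹, by simp⟩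

noncomputable def hArith (Δ : ℕ → ℝ) : ArithmeticFunction ℝ := fArith Δ * vArith * vArith

@[simp] lemma fArith_apply (Δ : ℕ → ℝ) (n : ℕ) :
    fArith Δ n = if Squarefree n then 1 / Δ n else 0 := rfl

@[simp] lemma uArith_apply (n : ℕ) : uArith n = ((n : ℝ))⁻¹ := rfl

@[simp] lemma vArith_apply (n : ℕ) :
    vArith n = ((ArithmeticFunction.moebius n : ℤ) : ℝ) * ((n : ℝ))⁻¹ := rfl

lemma uv_eq_one : uArith * vArith = 1 := by
  ext n
  rw [ArithmeticFunction.mul_apply]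
  rcases Nat.eq_zero_or_pos n with rfl | hn
  · simp
  have key : ∀ z ∈ n.divisorsAntidiagonal,
      uArith z.1 * vArith z.2 = ((ArithmeticFunction.moebius z.2 : ℤ) : ℝ) * ((n:ℝ))⁻¹ := by
    rintro ⟨d, e⟩ hz
    obtain ⟨hprod, hn0⟩ := Nat.mem_divisorsAntidiagonal.mp hz
    simp only at hprod
    simp only [uArith_apply, vArith_apply]
    rw [← hprod]
    have hd : (d:ℝ) ≠ 0 := by
      simp only [ne_eq, Nat.cast_eq_zero]
      rintro rfl; rw [zero_mul] at hprod; omega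
    have he : (e:ℝ) ≠ 0 := by
      simp only [ne_eq, Nat.cast_eq_zero]
      rintro rfl; rw [mul_zero] at hprod; omega
    push_cast
    field_simp
  rw [Finset.sum_congr rfl key, ← Finset.sum_mul]
  have h0 : ∑ z ∈ n.divisorsAntidiagonal, (ArithmeticFunction.moebius z.2 : ℤ) =
      if n = 1 then 1 else 0 := by
    have h1 := congrArg (fun g : ArithmeticFunction ℤ => g n)
      ArithmeticFunction.coe_zeta_mul_moebius
    simp only [ArithmeticFunction.mul_apply, ArithmeticFunction.one_apply,
      ArithmeticFunction.natCoe_apply, ArithmeticFunction.zeta_apply] at h1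
    rw [← h1]
    refine Finset.sum_congr rfl fun z hz => ?_
    obtain ⟨hprod, hn0⟩ := Nat.mem_divisorsAntidiagonal.mp hz
    have hz1 : z.1 ≠ 0 := by intro h; rw [h, zero_mul] at hprod; omega
    rw [if_neg hz1, Nat.cast_one, one_mul]
  have hcast : ∑ z ∈ n.divisorsAntidiagonal, ((ArithmeticFunction.moebius z.2 : ℤ) : ℝ)
      = (((if n = 1 then 1 else 0 : ℤ)) : ℝ) := by
    rw [← h0]; push_cast; rfl
  rw [hcast, ArithmeticFunction.one_apply]
  split_ifs with h
  · subst h; norm_num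
  · norm_num

lemma fArith_mult (Δ : ℕ → ℝ) (hone : Δ 1 = 1)
    (hmul : ∀ m n : ℕ, Nat.Coprime m n → Δ (m * n) = Δ m * Δ n) :
    (fArith Δ).IsMultiplicative := by
  constructor
  · simp [hone]
  · intro m n hcop
    simp only [fArith_apply]
    by_cases hsq : Squarefree (m * n)
    · obtain ⟨-, hm, hn⟩ := Nat.squarefree_mul_iff.mp hsq
      rw [if_pos hsq, if_pos hm, if_pos hn, hmul m n hcop, div_mul_div_comm, one_mul]
    · rw [if_neg hsq]
      rcases (not_and_or.mp fun hc => hsq (Nat.squarefree_mul_iff.mpr ⟨hcop, hc⟩) :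
        ¬ Squarefree m ∨ ¬ Squarefree n) with h | h
      · rw [if_neg h, zero_mul]
      · rw [if_neg h, mul_zero]

lemma vArith_mult : vArith.IsMultiplicative := by
  constructor
  · simp
  · intro m n hcop
    simp only [vArith_apply]
    rw [ArithmeticFunction.isMultiplicative_moebius.map_mul_of_coprime hcop]
    push_cast
    rw [mul_inv]
    ring

lemma hArith_mult (Δ : ℕ → ℝ) (hone : Δ 1 = 1)
    (hmul : ∀ m n : ℕ, Nat.Coprime m n → Δ (m * n) = Δ m * Δ n) :
    (hArith Δ).IsMultiplicative :=
  ((fArith_mult Δ hone hmul).mul vArith_mult).mul vArith_mult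



section PP

variable {p : ℕ}

noncomputable def vvv (p : ℕ) : ℕ → ℝ := fun k =>
  if k = 0 then 1 else if k = 1 then -2*(p:ℝ)⁻¹ else if k = 2 then ((p:ℝ)⁻¹)^2 else 0

lemma v_pp (hp : p.Prime) (j : ℕ) :
    vArith (p ^ j) = if j = 0 then 1 else if j = 1 then -(p:ℝ)⁻¹ else 0 := by
  rcases j with _ | _ | j
  · simp
  · rw [pow_one, vArith_apply, ArithmeticFunction.moebius_apply_prime hp]
    push_cast; norm_num
  · rw [vArith_apply,
      ArithmeticFunction.moebius_apply_prime_pow hp (by omega : j + 1 + 1 ≠ 0)]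
    rw [if_neg (by omega), if_neg (by omega), if_neg (by omega)]
    push_cast
    norm_num

lemma vv_pp (hp : p.Prime) (k : ℕ) : (vArith * vArith) (p ^ k) = vvv p k := by
  rw [mul_apply_pp _ _ hp k, vvv]
  rcases k with _ | _ | _ | k
  · simp [v_pp hp]
  · rw [Finset.sum_range_succ, Finset.sum_range_succ, Finset.sum_range_zero]
    simp only [v_pp hp]
    norm_num
    ring
  · rw [Finset.sum_range_succ, Finset.sum_range_succ, Finset.sum_range_succ,
      Finset.sum_range_zero]
    simp only [v_pp hp]
    norm_num
    ring
  · rw [if_neg (by omega), if_neg (by omega), if_neg (by omega)]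
    apply Finset.sum_eq_zero
    intro i hi
    rw [v_pp hp, v_pp hp]
    split_ifs <;> first | omega | ring

lemma f_pp_ge2 (Δ : ℕ → ℝ) (hp : p.Prime) {i : ℕ} (hi : 2 ≤ i) :
    fArith Δ (p ^ i) = 0 := by
  rw [fArith_apply, if_neg]
  intro hs
  have hdvd : p * p ∣ p ^ i := by
    rw [← pow_two]; exact pow_dvd_pow p hi
  exact hp.not_isUnit (hs p hdvd)

lemma f_p (Δ : ℕ → ℝ) (hp : p.Prime) : fArith Δ p = 1 / Δ p := by
  rw [fArith_apply, if_pos hp.squarefree]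

lemma f_one (Δ : ℕ → ℝ) (hone : Δ 1 = 1) : fArith Δ 1 = 1 := by
  simp [hone]

lemma h_pp (Δ : ℕ → ℝ) (hp : p.Prime) (k : ℕ) :
    hArith Δ (p ^ k) = ∑ i ∈ range (k + 1),
      fArith Δ (p ^ i) * (vArith * vArith) (p ^ (k - i)) := by
  rw [hArith, mul_assoc, mul_apply_pp _ _ hp k]

lemma h_pp_eq (Δ : ℕ → ℝ) (hone : Δ 1 = 1) (hp : p.Prime) {k : ℕ} (hk : 1 ≤ k) :
    hArith Δ (p ^ k) = vvv p k + (1 / Δ p) * vvv p (k - 1) := by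
  rw [h_pp Δ hp k, Finset.range_eq_Ico,
    ← Finset.sum_Ico_consecutive _ (by omega : 0 ≤ 2) (by omega : 2 ≤ k + 1)]
  have h2 : ∑ i ∈ Ico 2 (k+1), fArith Δ (p^i) * (vArith*vArith) (p^(k-i)) = 0 :=
    Finset.sum_eq_zero (fun i hi => by
      rw [f_pp_ge2 Δ hp (Finset.mem_Ico.mp hi).1, zero_mul])
  rw [h2, add_zero, ← Finset.range_eq_Ico, Finset.sum_range_succ, Finset.sum_range_succ,
    Finset.sum_range_zero, pow_zero, pow_one, f_one Δ hone, f_p Δ hp, vv_pp hp, vv_pp hp,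
    Nat.sub_zero]
  ring

lemma h_one (Δ : ℕ → ℝ) (hone : Δ 1 = 1)
    (hmul : ∀ m n : ℕ, Nat.Coprime m n → Δ (m * n) = Δ m * Δ n) :
    hArith Δ 1 = 1 := (hArith_mult Δ hone hmul).1

lemma h_p1 (Δ : ℕ → ℝ) (hone : Δ 1 = 1) (hp : p.Prime) :
    hArith Δ p = 1 / Δ p - 2*(p:ℝ)⁻¹ := by
  have h := h_pp_eq Δ hone hp (k := 1) le_rfl
  rw [pow_one] at h
  rw [h]
  norm_num [vvv]
  ring

lemma h_p2 (Δ : ℕ → ℝ) (hone : Δ 1 = 1) (hp : p.Prime) :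
    hArith Δ (p ^ 2) = ((p:ℝ)⁻¹)^2 - 2*(p:ℝ)⁻¹*(1 / Δ p) := by
  have h := h_pp_eq Δ hone hp (k := 2) (by omega)
  rw [h]
  norm_num [vvv]
  ring

lemma h_p3 (Δ : ℕ → ℝ) (hone : Δ 1 = 1) (hp : p.Prime) :
    hArith Δ (p ^ 3) = (1 / Δ p) * ((p:ℝ)⁻¹)^2 := by
  have h := h_pp_eq Δ hone hp (k := 3) (by omega)
  rw [h]
  norm_num [vvv]

lemma h_pp_ge4 (Δ : ℕ → ℝ) (hone : Δ 1 = 1) (hp : p.Prime) {k : ℕ} (hk : 4 ≤ k) :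
    hArith Δ (p ^ k) = 0 := by
  rw [h_pp_eq Δ hone hp (by omega : 1 ≤ k)]
  simp only [vvv]
  rw [if_neg (by omega), if_neg (by omega), if_neg (by omega),
    if_neg (by omega), if_neg (by omega), if_neg (by omega)]
  ring

end PP


section Bounds

variable {C : ℝ} {Δ ε : ℕ → ℝ} {p : ℕ}

lemma habs1 (hC : 0 ≤ C) (hpos : ∀ n : ℕ, 1 ≤ n → 0 < Δ n) (hone : Δ 1 = 1)
    (hε : ∀ q : ℕ, q.Prime → 0 ≤ ε q ∧ ε q ≤ C)
    (hΔp : ∀ q : ℕ, q.Prime → Δ q = (q : ℝ) / 2 + ε q) (hp : p.Prime) :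
    |hArith Δ p| ≤ 4*C/(p:ℝ)^2 := by
  have ha : (2:ℝ) ≤ (p:ℝ) := by exact_mod_cast hp.two_le
  have ha0 : (0:ℝ) < p := by linarith
  obtain ⟨he0, heC⟩ := hε p hp
  have hΔ := hΔp p hp
  have hΔpos : 0 < Δ p := hpos p hp.one_lt.le
  rw [h_p1 Δ hone hp]
  have hfp : 1/Δ p ≤ 2*(p:ℝ)⁻¹ := by
    rw [div_le_iff₀ hΔpos, hΔ]
    have : (p:ℝ)⁻¹ * (p:ℝ) = 1 := inv_mul_cancel₀ (ne_of_gt ha0)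
    nlinarith
  rw [abs_of_nonpos (by linarith)]
  have hkey : -(1/Δ p - 2*(p:ℝ)⁻¹) = 2*(ε p)/((p:ℝ)*Δ p) := by
    rw [hΔ]
    have h1 : (p:ℝ)/2 + ε p ≠ 0 := by positivity
    field_simp
    ring
  rw [hkey, div_le_div_iff₀ (by positivity) (by positivity), hΔ]
  nlinarith [sq_nonneg (p:ℝ), mul_nonneg (mul_nonneg hC he0) ha0.le,
    mul_nonneg (sub_nonneg.mpr heC) (sq_nonneg (p:ℝ))]

lemma habs2 (hpos : ∀ n : ℕ, 1 ≤ n → 0 < Δ n) (hone : Δ 1 = 1)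
    (hε : ∀ q : ℕ, q.Prime → 0 ≤ ε q ∧ ε q ≤ C)
    (hΔp : ∀ q : ℕ, q.Prime → Δ q = (q : ℝ) / 2 + ε q) (hp : p.Prime) :
    |hArith Δ (p^2)| ≤ 5/(p:ℝ)^2 := by
  have ha : (2:ℝ) ≤ (p:ℝ) := by exact_mod_cast hp.two_le
  have ha0 : (0:ℝ) < p := by linarith
  obtain ⟨he0, heC⟩ := hε p hp
  have hΔpos : 0 < Δ p := hpos p hp.one_lt.le
  have hfp : 1/Δ p ≤ 2*(p:ℝ)⁻¹ := by
    rw [div_le_iff₀ hΔpos, hΔp p hp]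
    have : (p:ℝ)⁻¹ * (p:ℝ) = 1 := inv_mul_cancel₀ (ne_of_gt ha0)
    nlinarith
  have hfp0 : 0 < 1/Δ p := by positivity
  rw [h_p2 Δ hone hp]
  have h5 : (5:ℝ)/(p:ℝ)^2 = ((p:ℝ)⁻¹)^2 + 4*((p:ℝ)⁻¹)^2 := by
    rw [inv_pow, inv_eq_one_div]
    field_simp
    norm_num
  calc |((p:ℝ)⁻¹)^2 - 2*(p:ℝ)⁻¹*(1/Δ p)| ≤ |((p:ℝ)⁻¹)^2| + |2*(p:ℝ)⁻¹*(1/Δ p)| :=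
        abs_sub _ _
  _ = ((p:ℝ)⁻¹)^2 + 2*(p:ℝ)⁻¹*(1/Δ p) := by
        rw [abs_of_nonneg (by positivity), abs_of_nonneg (by positivity)]
  _ ≤ ((p:ℝ)⁻¹)^2 + 2*(p:ℝ)⁻¹*(2*(p:ℝ)⁻¹) := by
        have h0 : (0:ℝ) ≤ 2*(p:ℝ)⁻¹ := by positivity
        nlinarith
  _ ≤ 5/(p:ℝ)^2 := by rw [h5]; nlinarith [sq_nonneg ((p:ℝ)⁻¹)]

lemma habs3 (hpos : ∀ n : ℕ, 1 ≤ n → 0 < Δ n) (hone : Δ 1 = 1)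
    (hε : ∀ q : ℕ, q.Prime → 0 ≤ ε q ∧ ε q ≤ C)
    (hΔp : ∀ q : ℕ, q.Prime → Δ q = (q : ℝ) / 2 + ε q) (hp : p.Prime) :
    |hArith Δ (p^3)| ≤ 2/(p:ℝ)^3 := by
  have ha : (2:ℝ) ≤ (p:ℝ) := by exact_mod_cast hp.two_le
  have ha0 : (0:ℝ) < p := by linarith
  have hΔpos : 0 < Δ p := hpos p hp.one_lt.le
  have hfp : 1/Δ p ≤ 2*(p:ℝ)⁻¹ := by
    rw [div_le_iff₀ hΔpos, hΔp p hp]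
    have h1 : (p:ℝ)⁻¹ * (p:ℝ) = 1 := inv_mul_cancel₀ (ne_of_gt ha0)
    nlinarith [(hε p hp).1]
  rw [h_p3 Δ hone hp, abs_of_nonneg (by positivity)]
  have h2 : (2:ℝ)/(p:ℝ)^3 = (2*(p:ℝ)⁻¹) * ((p:ℝ)⁻¹)^2 := by
    rw [inv_pow, inv_eq_one_div]
    field_simp
  rw [h2]
  exact mul_le_mul_of_nonneg_right hfp (by positivity)

end Bounds


section Summ

variable {C : ℝ} {Δ ε : ℕ → ℝ}

lemma summable_W (hC : 0 ≤ C) (hpos : ∀ n : ℕ, 1 ≤ n → 0 < Δ n) (hone : Δ 1 = 1)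
    (hmul : ∀ m n : ℕ, Nat.Coprime m n → Δ (m * n) = Δ m * Δ n)
    (hε : ∀ q : ℕ, q.Prime → 0 ≤ ε q ∧ ε q ≤ C)
    (hΔp : ∀ q : ℕ, q.Prime → Δ q = (q : ℝ) / 2 + ε q) :
    Summable (fun n : ℕ => |hArith Δ n| * (1 + Real.log n)^2) := by
  have hmult := hArith_mult Δ hone hmul
  set B : ℕ → ℝ := fun n => |hArith Δ n| * (n:ℝ) ^ (3⁻¹ : ℝ) with hB
  have hB0 : ∀ n, 0 ≤ B n := fun n => by
    apply mul_nonneg (abs_nonneg _) (Real.rpow_nonneg (Nat.cast_nonneg n) _)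
  have hB1 : B 1 = 1 := by
    simp only [hB, hmult.1, Nat.cast_one, Real.one_rpow, abs_one, mul_one]
  have hBmul : ∀ {m n : ℕ}, m.Coprime n → B (m*n) = B m * B n := by
    intro m n hc
    simp only [hB]
    rw [hmult.2 hc, abs_mul, Nat.cast_mul,
      Real.mul_rpow (Nat.cast_nonneg m) (Nat.cast_nonneg n)]
    ring
  have hppsum : ∀ {q : ℕ}, q.Prime → Summable (fun e : ℕ => ‖B (q^e)‖) := by
    intro q hq
    apply summable_of_ne_finset_zero (s := Finset.range 4)
    intro e he
    have he4 : 4 ≤ e := by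
      by_contra hlt
      exact he (Finset.mem_range.mpr (by omega))
    simp only [hB, h_pp_ge4 Δ hone hq he4, abs_zero, zero_mul, norm_zero]
  -- local sums
  set D : ℝ := 4*C + 7 with hD
  have hD0 : 0 ≤ D := by rw [hD]; linarith
  set g : ℕ → ℝ := fun n => 1/(n:ℝ) ^ ((4:ℝ)/3) with hg
  have hg0 : ∀ n, 0 ≤ g n := fun n => by
    apply div_nonneg zero_le_one (Real.rpow_nonneg (Nat.cast_nonneg n) _)
  have hlocal : ∀ q : ℕ, q.Prime → (∑' e, B (q^e)) ≤ 1 + D * g q := by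
    intro q hq
    have ha : (2:ℝ) ≤ (q:ℝ) := by exact_mod_cast hq.two_le
    have ha0 : (0:ℝ) < q := by linarith
    have ha1 : (1:ℝ) ≤ q := by linarith
    have hrw : ∀ k : ℕ, B (q^k) = |hArith Δ (q^k)| * (q:ℝ) ^ ((k : ℝ)/3) := by
      intro k
      simp only [hB]
      rw [Nat.cast_pow, ← Real.rpow_natCast (q:ℝ) k, ← Real.rpow_mul ha0.le,
        show ((k:ℝ)/3 : ℝ) = (k:ℝ)*3⁻¹ from by ring]
    have hterm : ∀ (k : ℕ) (c m : ℝ), 0 ≤ c → |hArith Δ (q^k)| ≤ c / (q:ℝ)^(m:ℝ) →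
        ((k:ℝ)/3 - m ≤ -(4/3)) → B (q^k) ≤ c * (q:ℝ) ^ (-(4:ℝ)/3) := by
      intro k c m hc hh hexp
      rw [hrw k]
      calc |hArith Δ (q^k)| * (q:ℝ) ^ ((k : ℝ)/3)
          ≤ (c / (q:ℝ)^(m:ℝ)) * (q:ℝ) ^ ((k : ℝ)/3) :=
            mul_le_mul_of_nonneg_right hh (Real.rpow_nonneg ha0.le _)
      _ = c * (q:ℝ) ^ ((k:ℝ)/3 - m) := by
            rw [Real.rpow_sub ha0]
            ring
      _ ≤ c * (q:ℝ) ^ (-(4:ℝ)/3) := by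
            apply mul_le_mul_of_nonneg_left _ hc
            apply Real.rpow_le_rpow_of_exponent_le ha1
            linarith
    have hb1 : B q ≤ (4*C) * (q:ℝ) ^ (-(4:ℝ)/3) := by
      have := hterm 1 (4*C) 2 (by linarith) ?_ (by norm_num)
      · rw [pow_one] at this; exact this
      · rw [show ((q:ℝ))^((2:ℝ)) = (q:ℝ)^(2:ℕ) by
          rw [← Real.rpow_natCast (q:ℝ) 2]; norm_num]
        rw [pow_one]
        exact habs1 hC hpos hone hε hΔp hq
    have hb2 : B (q^2) ≤ 5 * (q:ℝ) ^ (-(4:ℝ)/3) := by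
      apply hterm 2 5 2 (by norm_num) ?_ (by norm_num)
      rw [show ((q:ℝ))^((2:ℝ)) = (q:ℝ)^(2:ℕ) by
          rw [← Real.rpow_natCast (q:ℝ) 2]; norm_num]
      exact habs2 hpos hone hε hΔp hq
    have hb3 : B (q^3) ≤ 2 * (q:ℝ) ^ (-(4:ℝ)/3) := by
      apply hterm 3 2 3 (by norm_num) ?_ (by norm_num)
      rw [show ((q:ℝ))^((3:ℝ)) = (q:ℝ)^(3:ℕ) by
          rw [← Real.rpow_natCast (q:ℝ) 3]; norm_num]
      exact habs3 hpos hone hε hΔp hq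
    have hts : (∑' e, B (q^e)) = B (q^0) + B (q^1) + B (q^2) + B (q^3) := by
      rw [tsum_eq_sum (s := Finset.range 4) ?_]
      · rw [Finset.sum_range_succ, Finset.sum_range_succ, Finset.sum_range_succ,
          Finset.sum_range_succ, Finset.sum_range_zero]
        ring
      · intro e he
        have he4 : 4 ≤ e := by
          by_contra hlt
          exact he (Finset.mem_range.mpr (by omega))
        simp only [hB, h_pp_ge4 Δ hone hq he4, abs_zero, zero_mul]
    rw [hts, pow_zero, pow_one, hB1]
    have hgq : g q = (q:ℝ) ^ (-(4:ℝ)/3) := by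
      rw [hg]
      simp only
      rw [show (-(4:ℝ)/3) = -((4:ℝ)/3) by ring, Real.rpow_neg ha0.le, one_div]
    rw [hgq, hD]
    linarith
  -- global partial sums
  have hZsum : Summable g := by
    rw [hg]
    exact Real.summable_one_div_nat_rpow.mpr (by norm_num)
  set Z : ℝ := ∑' n, g n with hZ
  have hprod_bound : ∀ N : ℕ, (∏ p ∈ N.primesBelow, ∑' e, B (p^e)) ≤ Real.exp (D * Z) := by
    intro N
    calc ∏ p ∈ N.primesBelow, ∑' e, B (p^e)
        ≤ ∏ p ∈ N.primesBelow, Real.exp (D * g p) := by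
          apply Finset.prod_le_prod
          · intro q _
            exact tsum_nonneg (fun e => hB0 _)
          · intro q hq
            refine le_trans (hlocal q (Nat.prime_of_mem_primesBelow hq)) ?_
            linarith [Real.add_one_le_exp (D * g q)]
    _ = Real.exp (∑ p ∈ N.primesBelow, D * g p) := (Real.exp_sum _ _).symm
    _ ≤ Real.exp (D * Z) := by
          apply Real.exp_le_exp.mpr
          rw [← Finset.mul_sum]
          apply mul_le_mul_of_nonneg_left _ hD0
          exact Summable.sum_le_tsum _ (fun i _ => hg0 i) hZsum
  have hpartial : ∀ N : ℕ, ∑ n ∈ Finset.range N, B n ≤ Real.exp (D * Z) := by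
    intro N
    obtain ⟨hsummable, hhs⟩ :=
      EulerProduct.summable_and_hasSum_smoothNumbers_prod_primesBelow_tsum
        hB1 hBmul hppsum N
    have hind : Summable ((N.smoothNumbers : Set ℕ).indicator B) := by
      rw [← summable_subtype_iff_indicator]
      exact hhs.summable
    have heq : ∑ n ∈ Finset.range N, B n =
        ∑ n ∈ Finset.range N, (N.smoothNumbers : Set ℕ).indicator B n := by
      refine Finset.sum_congr rfl fun n hn => ?_
      rcases Nat.eq_zero_or_pos n with rfl | hn1
      · rw [Set.indicator_of_notMem]
        · simp only [hB, ArithmeticFunction.map_zero, abs_zero, zero_mul]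
        · intro hmem
          exact (Nat.ne_zero_of_mem_smoothNumbers hmem) rfl
      · rw [Set.indicator_of_mem]
        rw [Nat.mem_smoothNumbers]
        refine ⟨by omega, fun q hq => ?_⟩
        calc q ≤ n := Nat.le_of_mem_primeFactorsList hq
        _ < N := Finset.mem_range.mp hn
    rw [heq]
    calc ∑ n ∈ Finset.range N, (N.smoothNumbers : Set ℕ).indicator B n
        ≤ ∑' n, (N.smoothNumbers : Set ℕ).indicator B n := by
          apply Summable.sum_le_tsum _ (fun i _ => ?_) hind
          exact Set.indicator_nonneg (fun j _ => hB0 j) i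
    _ = ∑' m : N.smoothNumbers, B m := (_root_.tsum_subtype _ _).symm
    _ = ∏ p ∈ N.primesBelow, ∑' e, B (p^e) := hhs.tsum_eq
    _ ≤ Real.exp (D * Z) := hprod_bound N
  have hBsum : Summable B := summable_of_sum_range_le hB0 hpartial
  -- comparison
  apply Summable.of_nonneg_of_le (fun n => by positivity) ?_ (hBsum.mul_left 49)
  intro n
  rcases Nat.eq_zero_or_pos n with rfl | hn1
  · simp only [ArithmeticFunction.map_zero, abs_zero, zero_mul, hB]
    positivity
  have hn1' : (1:ℝ) ≤ n := by exact_mod_cast hn1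
  have hn0 : (0:ℝ) < n := by linarith
  set s : ℝ := (n:ℝ) ^ ((6:ℝ)⁻¹) with hs
  have hs1 : 1 ≤ s := Real.one_le_rpow hn1' (by norm_num)
  have hs0 : 0 < s := by linarith
  have hlogn : Real.log n = 6 * Real.log s := by
    rw [hs, Real.log_rpow hn0]
    ring
  have hlogs : Real.log s ≤ s - 1 := Real.log_le_sub_one_of_pos hs0
  have hln0 : 0 ≤ Real.log n := Real.log_nonneg hn1'
  have h7 : 1 + Real.log n ≤ 7 * s := by
    rw [hlogn]
    nlinarith
  have hsq : (1 + Real.log n)^2 ≤ 49 * s^2 := by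
    nlinarith
  have hs2 : s^2 = (n:ℝ) ^ (3⁻¹ : ℝ) := by
    rw [hs, ← Real.rpow_natCast ((n:ℝ) ^ ((6:ℝ)⁻¹)) 2, ← Real.rpow_mul hn0.le]
    norm_num
  calc |hArith Δ n| * (1 + Real.log n)^2 ≤ |hArith Δ n| * (49 * s^2) :=
        mul_le_mul_of_nonneg_left hsq (abs_nonneg _)
  _ = 49 * B n := by rw [hs2, hB]; ring

end Summ



lemma logdiv {d m : ℕ} (hd : 1 ≤ d) (hdm : d ≤ m) :
    Real.log ((m/d : ℕ)) ≤ Real.log m - Real.log d ∧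
    Real.log m - Real.log d ≤ Real.log ((m/d : ℕ)) + 1 := by
  set q := m / d with hq
  have hq1 : 1 ≤ q := (Nat.one_le_div_iff (by omega)).mpr hdm
  have hm1 : 1 ≤ m := le_trans hd hdm
  have hd0 : (0:ℝ) < d := by exact_mod_cast hd
  have hm0 : (0:ℝ) < m := by exact_mod_cast hm1
  have hq0 : (0:ℝ) < q := by exact_mod_cast hq1
  have hlogdiv : Real.log ((m:ℝ)/(d:ℝ)) = Real.log m - Real.log d :=
    Real.log_div (ne_of_gt hm0) (ne_of_gt hd0)
  constructor
  · rw [← hlogdiv]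
    exact Real.log_le_log hq0 Nat.cast_div_le
  · rw [← hlogdiv]
    have h3 : m < d * (q + 1) := by
      have h := Nat.div_add_mod m d
      have h2 : m % d < d := Nat.mod_lt m (by omega)
      calc m = d * q + m % d := by rw [h]
      _ < d * q + d := by omega
      _ = d * (q+1) := by ring
    have h4 : (m:ℝ)/(d:ℝ) ≤ 2*(q:ℝ) := by
      rw [div_le_iff₀ hd0]
      have h5 : (m:ℝ) < (d:ℝ) * ((q:ℝ)+1) := by exact_mod_cast h3
      have h6 : (q:ℝ) + 1 ≤ 2*(q:ℝ) := by
        have : (1:ℝ) ≤ q := by exact_mod_cast hq1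
        linarith
      nlinarith
    calc Real.log ((m:ℝ)/(d:ℝ)) ≤ Real.log (2*(q:ℝ)) := Real.log_le_log (by positivity) h4
    _ = Real.log 2 + Real.log q := Real.log_mul (by norm_num) (ne_of_gt hq0)
    _ ≤ Real.log q + 1 := by linarith [log_two_le_one]

lemma Hs_diff {d m : ℕ} (hd : 1 ≤ d) (hdm : d ≤ m) :
    |Hs (m/d) - (Real.log m - Real.log d)| ≤ 1 := by
  obtain ⟨hlo, hhi⟩ := logdiv hd hdm
  have h1 := Hs_le (m/d)
  have h2 := le_Hs (m/d)
  rw [abs_le]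
  constructor <;> linarith

lemma T_est (m : ℕ) (hm : 1 ≤ m) :
    |(∑ n ∈ Icc 1 m, (uArith * uArith) n) - (Real.log m)^2/2| ≤ 11*(1 + Real.log m) := by
  rw [hyperbola]
  have key : ∑ d ∈ Icc 1 m, uArith d * ∑ e ∈ Icc 1 (m/d), uArith e
      = ∑ d ∈ Icc 1 m, (d:ℝ)⁻¹ * Hs (m/d) := by
    refine Finset.sum_congr rfl fun d _ => ?_
    rw [uArith_apply, Hs]
    congr 1
    exact Finset.sum_congr rfl fun a _ => (one_div _).symm
  rw [key]
  set L := Real.log m with hL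
  have hL0 : 0 ≤ L := Real.log_nonneg (by exact_mod_cast hm)
  have hid : ∑ d ∈ Icc 1 m, (d:ℝ)⁻¹ * (L - Real.log d) = L * Hs m - Ps m := by
    rw [Hs, Ps, Finset.mul_sum, ← Finset.sum_sub_distrib]
    refine Finset.sum_congr rfl fun d _ => ?_
    rw [one_div]
    ring
  have hsb : |∑ d ∈ Icc 1 m, (d:ℝ)⁻¹ * Hs (m/d)
      - ∑ d ∈ Icc 1 m, (d:ℝ)⁻¹ * (L - Real.log d)| ≤ Hs m := by
    rw [← Finset.sum_sub_distrib]
    have hterm : ∀ d ∈ Icc 1 m, (d:ℝ)⁻¹ * Hs (m/d) - (d:ℝ)⁻¹*(L - Real.log d)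
        = (d:ℝ)⁻¹ * (Hs (m/d) - (L - Real.log d)) := fun d _ => by ring
    rw [Finset.sum_congr rfl hterm]
    refine le_trans (Finset.abs_sum_le_sum_abs _ _) ?_
    rw [Hs]
    apply Finset.sum_le_sum
    intro d hd
    obtain ⟨hd1, hdm⟩ := Finset.mem_Icc.mp hd
    have hdpos : (0:ℝ) < d := by exact_mod_cast hd1
    rw [abs_mul, abs_of_nonneg (by positivity : (0:ℝ) ≤ (d:ℝ)⁻¹)]
    calc (d:ℝ)⁻¹ * |Hs (m/d) - (L - Real.log d)| ≤ (d:ℝ)⁻¹ * 1 :=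
          mul_le_mul_of_nonneg_left (Hs_diff hd1 hdm) (by positivity)
    _ = 1/(d:ℝ) := by rw [mul_one, one_div]
  have hHs1 := Hs_le m
  have hHs2 := le_Hs m
  have hPs := Ps_est m hm
  rw [abs_le] at hsb hPs ⊢
  rw [hid] at hsb
  constructor <;> nlinarith [hsb.1, hsb.2, hPs.1, hPs.2]


end SqDelta
open SqDelta in
set_option maxHeartbeats 1000000 in
theorem squarefree_sum_reciprocal_delta (C : ℝ) (hC : 0 ≤ C)
    (Δ : ℕ → ℝ) (ε : ℕ → ℝ)
    (hpos : ∀ n : ℕ, 1 ≤ n → 0 < Δ n)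
    (hone : Δ 1 = 1)
    (hmul : ∀ m n : ℕ, Nat.Coprime m n → Δ (m * n) = Δ m * Δ n)
    (hε : ∀ p : ℕ, p.Prime → 0 ≤ ε p ∧ ε p ≤ C)
    (hΔp : ∀ p : ℕ, p.Prime → Δ p = (p : ℝ) / 2 + ε p) :
    ∃ 𝔖 : ℝ,
      Filter.Tendsto
        (fun y : ℕ => ∏ p ∈ (Finset.range y).filter Nat.Prime,
          (1 - 1 / (p : ℝ)) ^ 2 * (1 + 1 / Δ p))
        Filter.atTop (nhds 𝔖) ∧
      ∃ K : ℝ, ∃ x₀ : ℕ, ∀ x : ℕ, x₀ ≤ x →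
        |(∑ n ∈ (Finset.Icc 1 x).filter Squarefree, 1 / Δ n) -
            𝔖 / 2 * (Real.log x) ^ 2| ≤ K * Real.log x := by
  classical
  have hmult := hArith_mult Δ hone hmul
  set W : ℕ → ℝ := fun n => |hArith Δ n| * (1 + Real.log n)^2 with hW
  have hWsum : Summable W := summable_W hC hpos hone hmul hε hΔp
  have hW0 : ∀ n, 0 ≤ W n := fun n => mul_nonneg (abs_nonneg _) (sq_nonneg _)
  have hlog_ge : ∀ n : ℕ, 0 ≤ Real.log n := by
    intro n
    rcases Nat.eq_zero_or_pos n with rfl | hn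
    · simp
    · exact Real.log_nonneg (by exact_mod_cast hn)
  have honele : ∀ n : ℕ, 1 ≤ (1 + Real.log n)^2 := fun n => by nlinarith [hlog_ge n]
  have habs_le : ∀ n, |hArith Δ n| ≤ W n := by
    intro n
    calc |hArith Δ n| = |hArith Δ n| * 1 := (mul_one _).symm
    _ ≤ |hArith Δ n| * (1 + Real.log n)^2 :=
        mul_le_mul_of_nonneg_left (honele n) (abs_nonneg _)
    _ = W n := rfl
  have hnorm_sum : Summable (fun n => ‖hArith Δ n‖) := by
    apply Summable.of_nonneg_of_le (fun n => norm_nonneg _) ?_ hWsum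
    intro n
    rw [Real.norm_eq_abs]
    exact habs_le n
  have hhsum : Summable (fun n => hArith Δ n) := hnorm_sum.of_norm
  set S : ℝ := ∑' n, W n with hS
  have hS0 : 0 ≤ S := tsum_nonneg hW0
  refine ⟨∑' n, hArith Δ n, ?_, ?_⟩
  · -- Euler product
    have hep := hmult.eulerProduct hnorm_sum
    refine Filter.Tendsto.congr (fun y => ?_) hep
    rw [show Nat.primesBelow y = (Finset.range y).filter Nat.Prime from by
      rw [Nat.primesBelow]]
    refine Finset.prod_congr rfl fun p hp => ?_
    have hpp : p.Prime := (Finset.mem_filter.mp hp).2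
    have hts : (∑' e, hArith Δ (p^e)) =
        hArith Δ (p^0) + hArith Δ (p^1) + hArith Δ (p^2) + hArith Δ (p^3) := by
      rw [tsum_eq_sum (s := Finset.range 4) ?_]
      · rw [Finset.sum_range_succ, Finset.sum_range_succ, Finset.sum_range_succ,
          Finset.sum_range_succ, Finset.sum_range_zero]
        ring
      · intro e he
        refine h_pp_ge4 Δ hone hpp ?_
        by_contra hlt
        exact he (Finset.mem_range.mpr (by omega))
    rw [hts, pow_zero, pow_one, h_one Δ hone hmul, h_p1 Δ hone hpp, h_p2 Δ hone hpp,
      h_p3 Δ hone hpp, one_div ((p:ℝ))]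
    ring
  · -- the asymptotic
    refine ⟨26*S, 3, fun x hx => ?_⟩
    have hx1 : 1 ≤ x := by omega
    have hx3 : (3:ℝ) ≤ x := by exact_mod_cast hx
    have hx0 : (0:ℝ) < x := by linarith
    set ℓ := Real.log x with hℓ
    have hℓ1 : 1 ≤ ℓ := by
      have he3 : Real.exp 1 ≤ 3 := le_of_lt (lt_trans Real.exp_one_lt_d9 (by norm_num))
      calc (1:ℝ) = Real.log (Real.exp 1) := (Real.log_exp 1).symm
      _ ≤ Real.log 3 := Real.log_le_log (Real.exp_pos 1) he3
      _ ≤ ℓ := Real.log_le_log (by norm_num) hx3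
    have hℓ0 : 0 < ℓ := by linarith
    have hfM : ∑ n ∈ (Finset.Icc 1 x).filter Squarefree, 1/Δ n
        = ∑ n ∈ Finset.Icc 1 x, fArith Δ n := by
      rw [Finset.sum_filter]
      exact Finset.sum_congr rfl fun n _ => (fArith_apply Δ n).symm
    have hfh : fArith Δ = hArith Δ * (uArith * uArith) := by
      have h1 : hArith Δ * (uArith * uArith)
          = fArith Δ * ((uArith * vArith) * (uArith * vArith)) := by
        rw [hArith]; ring
      rw [h1, uv_eq_one]
      ring
    have hmain : ∑ n ∈ Finset.Icc 1 x, fArith Δ n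
        = ∑ d ∈ Finset.Icc 1 x, hArith Δ d * (∑ e ∈ Finset.Icc 1 (x/d), (uArith*uArith) e) := by
      rw [hfh]
      exact hyperbola _ _ x
    set P0 : ℝ := ∑ d ∈ Finset.Icc 1 x, hArith Δ d with hP0def
    set P1 : ℝ := ∑ d ∈ Finset.Icc 1 x, hArith Δ d * Real.log d with hP1def
    set P2 : ℝ := ∑ d ∈ Finset.Icc 1 x, hArith Δ d * (Real.log d)^2 with hP2def
    have hWpartial : ∀ (F : ℕ → ℝ), (∀ d ∈ Finset.Icc 1 x, |F d| ≤ W d) →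
        |∑ d ∈ Finset.Icc 1 x, F d| ≤ S := by
      intro F hF
      refine le_trans (Finset.abs_sum_le_sum_abs _ _) ?_
      refine le_trans (Finset.sum_le_sum hF) ?_
      exact Summable.sum_le_tsum _ (fun i _ => hW0 i) hWsum
    have hstep2 : |(∑ d ∈ Finset.Icc 1 x, hArith Δ d *
          (∑ e ∈ Finset.Icc 1 (x/d), (uArith*uArith) e))
        - ∑ d ∈ Finset.Icc 1 x, hArith Δ d * ((ℓ - Real.log d)^2/2)| ≤ 24*S*ℓ := by
      rw [← Finset.sum_sub_distrib]
      refine le_trans (Finset.abs_sum_le_sum_abs _ _) ?_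
      have hsum_le : ∀ d ∈ Finset.Icc 1 x,
          |hArith Δ d * (∑ e ∈ Finset.Icc 1 (x/d), (uArith*uArith) e)
            - hArith Δ d * ((ℓ - Real.log d)^2/2)| ≤ W d * (24*ℓ) := by
        intro d hd
        obtain ⟨hd1, hdx⟩ := Finset.mem_Icc.mp hd
        have hq1 : 1 ≤ x / d := (Nat.one_le_div_iff (by omega)).mpr hdx
        have hTq := T_est (x/d) hq1
        have hlogq_le : Real.log ((x/d : ℕ)) ≤ ℓ := by
          apply Real.log_le_log (by exact_mod_cast hq1)
          exact_mod_cast Nat.div_le_self x d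
        have hlogq0 : 0 ≤ Real.log ((x/d : ℕ)) := hlog_ge (x/d)
        have hlogd0 : 0 ≤ Real.log d := hlog_ge d
        obtain ⟨hlo, hhi⟩ := logdiv hd1 hdx
        have hE : |(∑ e ∈ Finset.Icc 1 (x/d), (uArith*uArith) e) - (ℓ - Real.log d)^2/2|
            ≤ 24*ℓ := by
          rw [abs_le] at hTq ⊢
          constructor <;> nlinarith [hTq.1, hTq.2]
        have hfact : hArith Δ d * (∑ e ∈ Finset.Icc 1 (x/d), (uArith*uArith) e)
            - hArith Δ d * ((ℓ - Real.log d)^2/2)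
            = hArith Δ d * ((∑ e ∈ Finset.Icc 1 (x/d), (uArith*uArith) e)
              - (ℓ - Real.log d)^2/2) := by ring
        rw [hfact, abs_mul]
        calc |hArith Δ d| * |(∑ e ∈ Finset.Icc 1 (x/d), (uArith*uArith) e)
              - (ℓ - Real.log d)^2/2| ≤ |hArith Δ d| * (24*ℓ) :=
              mul_le_mul_of_nonneg_left hE (abs_nonneg _)
        _ ≤ W d * (24*ℓ) := by
              apply mul_le_mul_of_nonneg_right (habs_le d)
              positivity
      refine le_trans (Finset.sum_le_sum hsum_le) ?_
      rw [← Finset.sum_mul]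
      have hble : ∑ d ∈ Finset.Icc 1 x, W d ≤ S := Summable.sum_le_tsum _ (fun i _ => hW0 i) hWsum
      nlinarith
    have hstep3 : ∑ d ∈ Finset.Icc 1 x, hArith Δ d * ((ℓ - Real.log d)^2/2)
        = ℓ^2/2 * P0 - ℓ * P1 + P2/2 := by
      have hterm : ∀ d ∈ Finset.Icc 1 x, hArith Δ d * ((ℓ - Real.log d)^2/2)
          = ℓ^2/2 * hArith Δ d - ℓ*(hArith Δ d * Real.log d)
            + (hArith Δ d * (Real.log d)^2)/2 := fun d _ => by ring
      rw [Finset.sum_congr rfl hterm, Finset.sum_add_distrib, Finset.sum_sub_distrib,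
        ← Finset.mul_sum, ← Finset.mul_sum, ← Finset.sum_div, ← hP0def, ← hP1def, ← hP2def]
    have hrange : Finset.range (x+1) = insert 0 (Finset.Icc 1 x) := by
      ext i
      simp only [Finset.mem_range, Finset.mem_insert, Finset.mem_Icc]
      omega
    have hsumrange : ∑ i ∈ Finset.range (x+1), hArith Δ i = P0 := by
      rw [hrange, Finset.sum_insert (by simp), ArithmeticFunction.map_zero, zero_add, hP0def]
    have hWsumrange : (0:ℝ) ≤ ∑ i ∈ Finset.range (x+1), W i :=
      Finset.sum_nonneg (fun i _ => hW0 i)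
    have hWtail : ∑' i, W (i + (x+1)) ≤ S := by
      have := Summable.sum_add_tsum_nat_add (f := W) (x+1) hWsum
      linarith
    have hshiftW : Summable (fun i => W (i + (x+1))) :=
      (summable_nat_add_iff (x+1)).mpr hWsum
    have hshifth : Summable (fun i => |hArith Δ (i + (x+1))|) :=
      Summable.of_nonneg_of_le (fun i => abs_nonneg _) (fun i => habs_le _) hshiftW
    have hP0tail : |P0 - ∑' n, hArith Δ n| ≤ S/ℓ^2 := by
      have hkey := Summable.sum_add_tsum_nat_add (f := fun n => hArith Δ n) (x+1) hhsum
      rw [hsumrange] at hkey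
      have h1 : |P0 - ∑' n, hArith Δ n| = |∑' i, hArith Δ (i + (x+1))| := by
        rw [show P0 - ∑' n, hArith Δ n = -(∑' i, hArith Δ (i + (x+1))) by linarith, abs_neg]
      rw [h1]
      have h2 : |∑' i, hArith Δ (i + (x+1))| ≤ ∑' i, |hArith Δ (i + (x+1))| := by
        have h2' := norm_tsum_le_tsum_norm (f := fun i => hArith Δ (i + (x+1)))
          (by simpa [Real.norm_eq_abs] using hshifth)
        simpa [Real.norm_eq_abs] using h2'
      refine le_trans h2 ?_
      have h3 : ∀ i : ℕ, |hArith Δ (i + (x+1))| ≤ W (i + (x+1)) / ℓ^2 := by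
        intro i
        have hnx : (x:ℝ) ≤ ((i + (x+1) : ℕ) : ℝ) := by
          have hle : x ≤ i + (x+1) := by omega
          exact_mod_cast hle
        have hlogn : ℓ ≤ Real.log ((i + (x+1) : ℕ)) := Real.log_le_log hx0 hnx
        rw [le_div_iff₀ (by positivity : (0:ℝ) < ℓ^2)]
        have h4 : ℓ^2 ≤ (1 + Real.log ((i + (x+1) : ℕ)))^2 := by
          nlinarith [hlog_ge (i + (x+1))]
        calc |hArith Δ (i + (x+1))| * ℓ^2
            ≤ |hArith Δ (i + (x+1))| * (1 + Real.log ((i + (x+1) : ℕ)))^2 :=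
              mul_le_mul_of_nonneg_left h4 (abs_nonneg _)
        _ = W (i + (x+1)) := rfl
      calc ∑' i, |hArith Δ (i + (x+1))| ≤ ∑' i, W (i + (x+1)) / ℓ^2 :=
            Summable.tsum_le_tsum h3 hshifth (hshiftW.div_const _)
      _ = (∑' i, W (i + (x+1))) / ℓ^2 := tsum_div_const
      _ ≤ S/ℓ^2 := by gcongr
    have hP0' : |ℓ^2/2 * (P0 - ∑' n, hArith Δ n)| ≤ S/2 := by
      rw [abs_mul, abs_of_nonneg (by positivity : (0:ℝ) ≤ ℓ^2/2)]
      calc ℓ^2/2 * |P0 - ∑' n, hArith Δ n| ≤ ℓ^2/2 * (S/ℓ^2) :=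
            mul_le_mul_of_nonneg_left hP0tail (by positivity)
      _ = S/2 := by
            field_simp
    have hP1' : |P1| ≤ S := by
      apply hWpartial
      intro d hd
      obtain ⟨hd1, _⟩ := Finset.mem_Icc.mp hd
      rw [abs_mul, abs_of_nonneg (hlog_ge d)]
      calc |hArith Δ d| * Real.log d ≤ |hArith Δ d| * (1 + Real.log d)^2 :=
            mul_le_mul_of_nonneg_left (by nlinarith [hlog_ge d]) (abs_nonneg _)
      _ = W d := rfl
    have hP2' : |P2| ≤ S := by
      apply hWpartial
      intro d hd
      rw [abs_mul, abs_of_nonneg (sq_nonneg (Real.log d))]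
      calc |hArith Δ d| * (Real.log d)^2 ≤ |hArith Δ d| * (1 + Real.log d)^2 :=
            mul_le_mul_of_nonneg_left (by nlinarith [hlog_ge d]) (abs_nonneg _)
      _ = W d := rfl
    rw [hfM, hmain]
    have hiden : (∑ d ∈ Finset.Icc 1 x, hArith Δ d *
          (∑ e ∈ Finset.Icc 1 (x/d), (uArith*uArith) e))
        - (∑' n, hArith Δ n)/2*ℓ^2
        = ((∑ d ∈ Finset.Icc 1 x, hArith Δ d *
            (∑ e ∈ Finset.Icc 1 (x/d), (uArith*uArith) e))
          - ∑ d ∈ Finset.Icc 1 x, hArith Δ d * ((ℓ - Real.log d)^2/2))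
          + ℓ^2/2*(P0 - ∑' n, hArith Δ n) - ℓ*P1 + P2/2 := by
      rw [hstep3]
      ring
    rw [hiden]
    have hup : ℓ*P1 ≤ ℓ*S := mul_le_mul_of_nonneg_left (le_trans (le_abs_self P1) hP1') hℓ0.le
    have hdn : ℓ*(-S) ≤ ℓ*P1 := by
      apply mul_le_mul_of_nonneg_left _ hℓ0.le
      have := neg_abs_le P1
      linarith
    have hSl : S ≤ S*ℓ := by nlinarith
    rw [abs_le] at hstep2 hP0' hP2' ⊢
    constructor <;> nlinarith [hstep2.1, hstep2.2, hP0'.1, hP0'.2, hP2'.1, hP2'.2]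
end
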